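/- Let q ≥ 2, let y ∈ ℝ^q satisfy y_1 + … + y_q = 0, and let w ∈ ℝ^q be arbitrary. Then there exists a permutation σ of {1,…,q} such that Σ_{i=1}^q w_i·y_{σ(i)} ≥ 0. Consequently, for every nonzero y ∈ M̃_≤^{q−1}, no open spherical cap of normalized surface area greater than 1/2 on the sphere {v : Σv_i = 0, ‖v‖ = ‖y‖} is disjoint from the set of permutations of y, i.e., the largest empty cap discrepancy of Π(y) is at most 1/2. -/

import Mathlib

open MeasureTheory Filter ENNReal

/-- Auxiliary: averaging over all permutations shows some permutation gives a
nonnegative pairing. -/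
lemma stmt4_aux (q : ℕ) (hq : 1 ≤ q) (y w : EuclideanSpace ℝ (Fin q)) (hy : ∑ i, y i = 0) :
    ∃ σ : Equiv.Perm (Fin q), 0 ≤ ∑ i, w i * y (σ i) := by
  have hqpos : 0 < q := hq
  haveI : NeZero q := ⟨hqpos.ne'⟩
  have hconst : ∀ i j : Fin q,
      (∑ σ : Equiv.Perm (Fin q), y (σ i)) = ∑ σ : Equiv.Perm (Fin q), y (σ j) := by
    intro i j
    rw [← Equiv.sum_comp (Equiv.mulRight (Equiv.swap i j))
      (fun σ : Equiv.Perm (Fin q) => y (σ i))]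
    refine Finset.sum_congr rfl fun σ _ => ?_
    simp only [Equiv.coe_mulRight, Equiv.Perm.mul_apply, Equiv.swap_apply_def]
    rw [if_pos trivial]
  have htot : ∑ i, ∑ σ : Equiv.Perm (Fin q), y (σ i) = 0 := by
    rw [Finset.sum_comm]
    have h2 : ∀ σ : Equiv.Perm (Fin q), ∑ i, y (σ i) = 0 := fun σ => by
      rw [Equiv.sum_comp σ y]; exact hy
    simp [h2]
  have hS : ∀ i : Fin q, ∑ σ : Equiv.Perm (Fin q), y (σ i) = 0 := by
    intro i
    have h1 : ∑ _j : Fin q, (∑ σ : Equiv.Perm (Fin q), y (σ i)) = 0 := by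
      rw [Finset.sum_congr rfl (fun j _ => hconst i j)]; exact htot
    rw [Finset.sum_const, Finset.card_univ, Fintype.card_fin, nsmul_eq_mul] at h1
    rcases mul_eq_zero.mp h1 with h | h
    · exact absurd h (Nat.cast_ne_zero.mpr hqpos.ne')
    · exact h
  by_contra h
  push_neg at h
  have hsum : ∑ σ : Equiv.Perm (Fin q), ∑ i, w i * y (σ i) = 0 := by
    rw [Finset.sum_comm]
    simp [← Finset.mul_sum, hS]
  have hlt : ∑ σ : Equiv.Perm (Fin q), ∑ i, w i * y (σ i) < 0 := by
    have hne : (Finset.univ : Finset (Equiv.Perm (Fin q))).Nonempty := Finset.univ_nonempty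
    calc ∑ σ : Equiv.Perm (Fin q), ∑ i, w i * y (σ i)
        < ∑ _σ : Equiv.Perm (Fin q), (0:ℝ) :=
          Finset.sum_lt_sum_of_nonempty hne (fun σ _ => h σ)
      _ = 0 := by simp
  linarith

/-- Part 1: for any `y` with coordinates summing to `0` and any `w`, some permutation `σ`
satisfies `Σ_i w_i y_{σ(i)} ≥ 0`.  Part 2 (Lemma 2.3, (37)): consequently, for nonzero
`y ∈ M̃_≤^{q-1}`, any open spherical cap on the sphere `{v : Σ v_i = 0, ‖v‖ = ‖y‖}` that is
disjoint from the set of permutations of `y` has normalized surface area at most `1/2`; here the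
uniform distribution on the sphere is formalized as a probability measure `μ` on `ℝ^q` that is
concentrated on the sphere and invariant under every linear isometry fixing `(1,…,1)`. -/
theorem stmt4 (q : ℕ) (hq : 2 ≤ q) :
    (∀ y w : EuclideanSpace ℝ (Fin q), (∑ i, y i = 0) →
      ∃ σ : Equiv.Perm (Fin q), 0 ≤ ∑ i, w i * y (σ i)) ∧
    (∀ y : EuclideanSpace ℝ (Fin q), y ≠ 0 →
      (∀ i j : Fin q, i ≤ j → y i ≤ y j) → (∑ i, y i = 0) →
      ∀ μ : Measure (EuclideanSpace ℝ (Fin q)), IsProbabilityMeasure μ →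
        μ {v | (∑ i, v i = 0) ∧ ‖v‖ = ‖y‖} = 1 →
        (∀ f : EuclideanSpace ℝ (Fin q) ≃ₗᵢ[ℝ] EuclideanSpace ℝ (Fin q),
          f ((WithLp.toLp 2 (fun _ => 1) : EuclideanSpace ℝ (Fin q))) = (WithLp.toLp 2 (fun _ => 1) : EuclideanSpace ℝ (Fin q)) →
          μ.map f = μ) →
        ∀ w : EuclideanSpace ℝ (Fin q), (∑ i, w i = 0) → ‖w‖ = ‖y‖ →
          ∀ t : ℝ, -1 ≤ t → t < 1 →
            (∀ σ : Equiv.Perm (Fin q), ¬ (‖y‖ ^ 2 * t < ∑ i, y (σ i) * w i)) →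
            μ {v | ((∑ i, v i = 0) ∧ ‖v‖ = ‖y‖) ∧ ‖y‖ ^ 2 * t < ∑ i, v i * w i} ≤ 1 / 2) := by
  have hq1 : 1 ≤ q := le_trans one_le_two hq
  constructor
  · exact fun y w hy => stmt4_aux q hq1 y w hy
  · intro y hy0 _hysort hysum μ hprob hsphere hinv w hwsum hwnorm t _ht1 _ht2 hdisj
    have hip : ∀ a b : EuclideanSpace ℝ (Fin q), (inner ℝ a b : ℝ) = ∑ i, a i * b i := by
      intro a b; simp [PiLp.inner_apply, RCLike.inner_apply, mul_comm]
    have hynorm : 0 < ‖y‖ := norm_pos_iff.mpr hy0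
    -- t must be nonnegative, since some permutation of y has nonnegative inner product with w
    have ht0 : 0 ≤ t := by
      by_contra hneg
      push_neg at hneg
      obtain ⟨σ, hσ⟩ := stmt4_aux q hq1 y w hysum
      refine hdisj σ ?_
      have h1 : ‖y‖ ^ 2 * t < 0 := mul_neg_of_pos_of_neg (by positivity) hneg
      have h2 : (0:ℝ) ≤ ∑ i, y (σ i) * w i := by
        have : ∑ i, y (σ i) * w i = ∑ i, w i * y (σ i) := by
          refine Finset.sum_congr rfl fun i _ => mul_comm _ _
        rw [this]; exact hσ
      linarith
    have hwne : w ≠ 0 := by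
      intro h; rw [h, norm_zero] at hwnorm; exact hynorm.ne' hwnorm.symm
    set ones : EuclideanSpace ℝ (Fin q) := WithLp.toLp 2 (fun _ => 1) with hones
    set f : EuclideanSpace ℝ (Fin q) ≃ₗᵢ[ℝ] EuclideanSpace ℝ (Fin q) :=
      Submodule.reflection (ℝ ∙ w)ᗮ with hf
    have hfw : f w = -w := Submodule.reflection_orthogonalComplement_singleton_eq_neg w
    have hfones : f ones = ones := by
      apply Submodule.reflection_mem_subspace_eq_self
      rw [Submodule.mem_orthogonal_singleton_iff_inner_right, hip]
      simpa [hones] using hwsum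
    have hμf : μ.map f = μ := hinv f hfones
    have hsumf : ∀ v : EuclideanSpace ℝ (Fin q), ∑ i, (f v) i = ∑ i, v i := by
      intro v
      have h1 : (inner ℝ (f v) ones : ℝ) = inner ℝ v ones := by
        conv_lhs => rw [← hfones]
        exact f.inner_map_map v ones
      have h2 := hip (f v) ones
      have h3 := hip v ones
      simp only [hones] at h2 h3
      simp only [PiLp.toLp_apply, WithLp.ofLp_toLp, mul_one] at h2 h3
      rw [← h2, ← h3]; exact h1
    have hinnf : ∀ v : EuclideanSpace ℝ (Fin q), ∑ i, (f v) i * w i = -(∑ i, v i * w i) := by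
      intro v
      have h1 : (inner ℝ (f v) w : ℝ) = inner ℝ v (f w) := by
        conv_lhs => rw [show w = f (f w) from (Submodule.reflection_reflection _ w).symm]
        exact f.inner_map_map v (f w)
      rw [hfw] at h1
      have h2 : (inner ℝ v (-w) : ℝ) = -(inner ℝ v w : ℝ) := by rw [inner_neg_right]
      rw [h2, hip, hip] at h1
      exact h1
    set A : Set (EuclideanSpace ℝ (Fin q)) :=
      {v | ((∑ i, v i = 0) ∧ ‖v‖ = ‖y‖) ∧ ‖y‖ ^ 2 * t < ∑ i, v i * w i} with hA
    set B : Set (EuclideanSpace ℝ (Fin q)) :=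
      {v | ((∑ i, v i = 0) ∧ ‖v‖ = ‖y‖) ∧ ∑ i, v i * w i < -(‖y‖ ^ 2 * t)} with hB
    have hcontsum : Continuous fun v : EuclideanSpace ℝ (Fin q) => ∑ i, v i :=
      continuous_finset_sum _ fun i _ => PiLp.continuous_apply 2 _ i
    have hcontin : Continuous fun v : EuclideanSpace ℝ (Fin q) => ∑ i, v i * w i :=
      continuous_finset_sum _ fun i _ => (PiLp.continuous_apply 2 _ i).mul continuous_const
    have hmA : MeasurableSet A :=
      (((hcontsum.measurable (measurableSet_singleton 0)).inter
        ((continuous_norm.measurable (measurableSet_singleton ‖y‖)))).inter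
        (measurableSet_lt measurable_const hcontin.measurable))
    have hmB : MeasurableSet B :=
      (((hcontsum.measurable (measurableSet_singleton 0)).inter
        ((continuous_norm.measurable (measurableSet_singleton ‖y‖)))).inter
        (measurableSet_lt hcontin.measurable measurable_const))
    have hpre : (f : EuclideanSpace ℝ (Fin q) → EuclideanSpace ℝ (Fin q)) ⁻¹' A = B := by
      ext v
      simp only [Set.mem_preimage, hA, hB, Set.mem_setOf_eq]
      rw [hsumf v, f.norm_map, hinnf v]
      constructor
      · rintro ⟨hs, hlt⟩; exact ⟨hs, by linarith⟩
      · rintro ⟨hs, hlt⟩; exact ⟨hs, by linarith⟩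
    have hAB : μ A = μ B := by
      conv_lhs => rw [← hμf]
      rw [Measure.map_apply f.continuous.measurable hmA, hpre]
    have hdisjAB : Disjoint A B := by
      rw [Set.disjoint_left]
      rintro v ⟨_, h1⟩ ⟨_, h2⟩
      have h3 : 0 ≤ ‖y‖ ^ 2 * t := mul_nonneg (sq_nonneg _) ht0
      linarith
    have hunion : μ A + μ B = μ (A ∪ B) := (measure_union hdisjAB hmB).symm
    have hle1 : μ (A ∪ B) ≤ 1 := prob_le_one
    rw [← hAB] at hunion
    have h2A : μ A + μ A ≤ 1 := hunion.le.trans hle1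
    by_contra hcon
    push_neg at hcon
    have hlt1 : (1 : ℝ≥0∞) < μ A + μ A := by
      calc (1 : ℝ≥0∞) = 1/2 + 1/2 := by rw [ENNReal.add_halves]
      _ < μ A + μ A := ENNReal.add_lt_add hcon hcon
    exact absurd h2A hlt1.not_ge
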